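/- arXiv:1804.06677 — 3 statements merged into one kernel-verified Lean document; each statement's English description precedes it below -/
import Mathlib

section
/- The subgroup L₂(11)_A = ⟨α, β, γ⟩ of Perm(Fin 12) is isomorphic as a group to L₂(11) = PSL(2, 𝔽₁₁). -/
open Equiv

/-- The 11-cycle (0 1 2 3 4 5 6 7 8 9 10) on `Fin 12`, fixing 11. -/
def α : Equiv.Perm (Fin 12) := c[0,1,2,3,4,5,6,7,8,9,10]

/-- The permutation (1 3 9 5 4)(2 6 7 10 8), fixing 0 and 11. -/
def β : Equiv.Perm (Fin 12) := c[1,3,9,5,4] * c[2,6,7,10,8]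

/-- The permutation (11 0)(1 10)(2 5)(3 7)(4 8)(6 9). -/
def γ : Equiv.Perm (Fin 12) := c[11,0] * c[1,10] * c[2,5] * c[3,7] * c[4,8] * c[6,9]

/-- The permutation (2 10)(3 4)(5 9)(6 7), fixing 0, 1, 8 and 11. -/
def δ : Equiv.Perm (Fin 12) := c[2,10] * c[3,4] * c[5,9] * c[6,7]

/-- L₂(11)_A, the subgroup of Perm (Fin 12) generated by α, β, γ. -/
def L2_11_A : Subgroup (Equiv.Perm (Fin 12)) := Subgroup.closure {α, β, γ}

/-- L₂(11) = PSL(2, 𝔽₁₁): the quotient of SL(2, ℤ/11ℤ) by its center. -/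
abbrev L2_11 :=
  Matrix.SpecialLinearGroup (Fin 2) (ZMod 11) ⧸
    Subgroup.center (Matrix.SpecialLinearGroup (Fin 2) (ZMod 11))

section L2Aux

open Matrix Projectivization
open scoped LinearAlgebra.Projectivization

instance : Fact (Nat.Prime 11) := ⟨by norm_num⟩

noncomputable section AuxL2

abbrev Fq := ZMod 11
abbrev SL2 := Matrix.SpecialLinearGroup (Fin 2) Fq
abbrev PP := ℙ Fq (Fin 2 → Fq)

/-- rep vectors for points of Fin 12 -/
def rep (k : Fin 12) : Fin 2 → Fq := if k = 11 then ![1, 0] else ![(k : ℕ), 1]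

lemma rep_ne_zero (k : Fin 12) : rep k ≠ 0 := by
  unfold rep
  split <;> intro h
  · have := congrFun h 0; simp at this
  · have := congrFun h 1; simp at this

lemma sl2_cancel (M : SL2) (u : Fin 2 → Fq) :
    (↑(M⁻¹) : Matrix (Fin 2) (Fin 2) Fq).mulVec ((↑M : Matrix (Fin 2) (Fin 2) Fq).mulVec u) = u := by
  rw [Matrix.mulVec_mulVec, ← Matrix.SpecialLinearGroup.coe_mul, inv_mul_cancel,
    Matrix.SpecialLinearGroup.coe_one, Matrix.one_mulVec]

lemma sl2_mulVec_inj (M : SL2) :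
    Function.Injective ((↑M : Matrix (Fin 2) (Fin 2) Fq).mulVecLin) := by
  intro v w h
  have h2 := congrArg (fun u => (↑(M⁻¹) : Matrix (Fin 2) (Fin 2) Fq).mulVec u) h
  simpa only [Matrix.mulVecLin_apply, sl2_cancel] using h2

/-- action on projectivization -/
def Pmap (M : SL2) : PP → PP :=
  Projectivization.map (↑M : Matrix (Fin 2) (Fin 2) Fq).mulVecLin (sl2_mulVec_inj M)

lemma mulVec_ne (M : SL2) {v : Fin 2 → Fq} (hv : v ≠ 0) :
    (↑M : Matrix (Fin 2) (Fin 2) Fq).mulVec v ≠ 0 := by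
  intro h
  apply hv
  apply sl2_mulVec_inj M
  simpa [Matrix.mulVecLin_apply] using h

lemma Pmap_mk (M : SL2) (v : Fin 2 → Fq) (hv : v ≠ 0) :
    Pmap M (Projectivization.mk Fq v hv) =
      Projectivization.mk Fq ((↑M : Matrix (Fin 2) (Fin 2) Fq).mulVec v) (mulVec_ne M hv) :=
  Projectivization.map_mk _ _ v hv

lemma Pmap_mul (M N : SL2) (p : PP) : Pmap (M * N) p = Pmap M (Pmap N p) := by
  induction p using Projectivization.ind with
  | h v hv =>
    rw [Pmap_mk, Pmap_mk, Pmap_mk]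
    exact (Projectivization.mk_eq_mk_iff' _ _ _ _ _).2
      ⟨1, by rw [one_smul, Matrix.mulVec_mulVec, Matrix.SpecialLinearGroup.coe_mul]⟩

lemma Pmap_one (p : PP) : Pmap 1 p = p := by
  induction p using Projectivization.ind with
  | h v hv =>
    rw [Pmap_mk]
    exact (Projectivization.mk_eq_mk_iff' _ _ _ _ _).2
      ⟨1, by rw [one_smul, Matrix.SpecialLinearGroup.coe_one, Matrix.one_mulVec]⟩

end AuxL2

noncomputable section Part2

lemma val_lt_11 {i : Fin 12} (hi : i ≠ 11) : (i : ℕ) < 11 := by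
  have : (i : ℕ) ≠ 11 := fun h => hi (by ext; simpa using h)
  omega

lemma repmk_injective :
    Function.Injective (fun k => Projectivization.mk Fq (rep k) (rep_ne_zero k)) := by
  intro i j h
  rw [Projectivization.mk_eq_mk_iff'] at h
  obtain ⟨a, ha⟩ := h
  by_cases hi : i = 11 <;> by_cases hj : j = 11
  · rw [hi, hj]
  · exfalso
    rw [hi] at ha
    unfold rep at ha
    rw [if_neg hj, if_pos rfl] at ha
    have h1 := congrFun ha 1
    have h0 := congrFun ha 0
    simp at h1 h0
    rw [h1] at h0
    simp at h0
  · exfalso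
    rw [hj] at ha
    unfold rep at ha
    rw [if_neg hi, if_pos rfl] at ha
    have h1 := congrFun ha 1
    simp at h1
  · unfold rep at ha
    rw [if_neg hi, if_neg hj] at ha
    have h1 := congrFun ha 1
    have h0 := congrFun ha 0
    simp at h1 h0
    rw [h1, one_mul] at h0
    have := congrArg ZMod.val h0
    rw [ZMod.val_cast_of_lt (val_lt_11 hj), ZMod.val_cast_of_lt (val_lt_11 hi)] at this
    exact Fin.ext this.symm

lemma natCast_val_eq (x : Fq) : ((x.val : ℕ) : Fq) = x := ZMod.natCast_rightInverse x

lemma repmk_surjective :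
    Function.Surjective (fun k => Projectivization.mk Fq (rep k) (rep_ne_zero k)) := by
  intro p
  induction p using Projectivization.ind with
  | h v hv =>
    by_cases hb : v 1 = 0
    · have ha : v 0 ≠ 0 := by
        intro h0
        apply hv
        funext i
        fin_cases i
        · exact h0
        · exact hb
      refine ⟨11, ?_⟩
      simp only
      rw [Projectivization.mk_eq_mk_iff']
      refine ⟨(v 0)⁻¹, ?_⟩
      unfold rep
      rw [if_pos rfl]
      funext i
      fin_cases i <;> simp [hb, inv_mul_cancel₀ ha]
    · set x : Fq := v 0 * (v 1)⁻¹ with hx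
      refine ⟨⟨x.val, by have := ZMod.val_lt x; omega⟩, ?_⟩
      have hne : (⟨x.val, by have := ZMod.val_lt x; omega⟩ : Fin 12) ≠ 11 := by
        intro h
        have := ZMod.val_lt x
        have h2 : x.val = 11 := by simpa [Fin.ext_iff] using h
        omega
      simp only
      rw [Projectivization.mk_eq_mk_iff']
      refine ⟨(v 1)⁻¹, ?_⟩
      unfold rep
      rw [if_neg hne]
      funext i
      fin_cases i
      · simp only [Pi.smul_apply, smul_eq_mul, Matrix.cons_val_zero]
        show (v 1)⁻¹ * v 0 = (((x.val : ℕ) : Fq))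
        rw [natCast_val_eq, hx]
        ring
      · simp only [Pi.smul_apply, smul_eq_mul, Matrix.cons_val_one, Matrix.head_cons]
        show (v 1)⁻¹ * v 1 = 1
        exact inv_mul_cancel₀ hb

/-- the equivalence Fin 12 ≃ P¹(F₁₁) -/
def e12 : Fin 12 ≃ PP :=
  Equiv.ofBijective _ ⟨repmk_injective, repmk_surjective⟩

lemma e12_apply (k : Fin 12) : e12 k = Projectivization.mk Fq (rep k) (rep_ne_zero k) := rfl

/-- the homomorphism SL(2,11) →* Perm (Fin 12) -/
def φ : SL2 →* Equiv.Perm (Fin 12) where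
  toFun M :=
    { toFun := fun k => e12.symm (Pmap M (e12 k))
      invFun := fun k => e12.symm (Pmap M⁻¹ (e12 k))
      left_inv := fun k => by
        simp only []
        rw [Equiv.apply_symm_apply, ← Pmap_mul, inv_mul_cancel, Pmap_one, Equiv.symm_apply_apply]
      right_inv := fun k => by
        simp only []
        rw [Equiv.apply_symm_apply, ← Pmap_mul, mul_inv_cancel, Pmap_one, Equiv.symm_apply_apply] }
  map_one' := by
    ext k
    simp [Pmap_one]
  map_mul' M N := by
    ext k
    simp only [Equiv.coe_fn_mk, Equiv.Perm.coe_mul, Function.comp_apply]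
    rw [Pmap_mul, Equiv.apply_symm_apply]

lemma φ_apply (M : SL2) (k : Fin 12) : φ M k = e12.symm (Pmap M (e12 k)) := rfl

lemma φ_apply_eq (M : SL2) (k j : Fin 12) (c : Fq)
    (h : c • rep j = (↑M : Matrix (Fin 2) (Fin 2) Fq).mulVec (rep k)) : φ M k = j := by
  rw [φ_apply, Equiv.symm_apply_eq, e12_apply, e12_apply, Pmap_mk,
    Projectivization.mk_eq_mk_iff']
  exact ⟨c, h⟩

lemma φ_eq_of (M : SL2) (σ : Equiv.Perm (Fin 12))
    (h : ∀ k : Fin 12, ∃ c : Fq, c • rep (σ k) =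
      (↑M : Matrix (Fin 2) (Fin 2) Fq).mulVec (rep k)) : φ M = σ := by
  apply Equiv.ext
  intro k
  obtain ⟨c, hc⟩ := h k
  exact φ_apply_eq M k (σ k) c hc

def Asl : SL2 := ⟨!![1, 1; 0, 1], by decide⟩
def Bsl : SL2 := ⟨!![5, 0; 0, 9], by decide⟩
def Csl : SL2 := ⟨!![0, 10; 1, 0], by decide⟩

end Part2

lemma φ_A : φ Asl = α := φ_eq_of _ _ (by decide)
lemma φ_B : φ Bsl = β := φ_eq_of _ _ (by decide)
lemma φ_C : φ Csl = γ := φ_eq_of _ _ (by decide)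

noncomputable section Part3

def usl (t : Fq) : SL2 := ⟨!![1, t; 0, 1], by simp [Matrix.det_fin_two_of]⟩
def lsl (t : Fq) : SL2 := ⟨!![1, 0; t, 1], by simp [Matrix.det_fin_two_of]⟩

lemma usl_mul (s t : Fq) : usl s * usl t = usl (s + t) := by
  apply Subtype.ext
  rw [Matrix.SpecialLinearGroup.coe_mul]
  ext i j
  fin_cases i <;> fin_cases j <;>
    simp [usl, Matrix.mul_apply, Fin.sum_univ_two] <;> ring

lemma usl_one : usl 1 = Asl := rfl

lemma usl_mem (t : Fq) : usl t ∈ Subgroup.closure ({Asl, Csl} : Set SL2) := by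
  have key : ∀ n : ℕ, usl (n : Fq) ∈ Subgroup.closure ({Asl, Csl} : Set SL2) := by
    intro n
    induction n with
    | zero =>
      have : usl (0 : Fq) = 1 := by
        apply Subtype.ext
        ext i j
        fin_cases i <;> fin_cases j <;> simp [usl]
      rw [Nat.cast_zero, this]
      exact one_mem _
    | succ n ih =>
      have : usl ((n + 1 : ℕ) : Fq) = usl (n : Fq) * usl 1 := by
        rw [usl_mul]; push_cast; ring_nf
      rw [this, usl_one]
      exact mul_mem ih (Subgroup.subset_closure (by simp))
  have := key t.val
  rwa [natCast_val_eq] at this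

lemma lsl_mem (t : Fq) : lsl t ∈ Subgroup.closure ({Asl, Csl} : Set SL2) := by
  have hC : Csl ∈ Subgroup.closure ({Asl, Csl} : Set SL2) :=
    Subgroup.subset_closure (by simp)
  have h1 : Csl * lsl t = usl (-t) * Csl := by
    apply Subtype.ext
    rw [Matrix.SpecialLinearGroup.coe_mul, Matrix.SpecialLinearGroup.coe_mul]
    have h11 : (11 : Fq) = 0 := by decide
    ext i j
    fin_cases i <;> fin_cases j <;>
      simp [usl, lsl, Csl, Matrix.mul_apply, Fin.sum_univ_two] <;>
      first
        | ring1
        | linear_combination t * h11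
  have h2 : lsl t = Csl⁻¹ * (usl (-t) * Csl) := by
    rw [← h1, inv_mul_cancel_left]
  rw [h2]
  exact mul_mem (inv_mem hC) (mul_mem (usl_mem _) hC)

lemma key_c_ne (N : SL2) (hc : (↑N : Matrix (Fin 2) (Fin 2) Fq) 1 0 ≠ 0) :
    N ∈ Subgroup.closure ({Asl, Csl} : Set SL2) := by
  set a := (↑N : Matrix (Fin 2) (Fin 2) Fq) 0 0 with ha
  set b := (↑N : Matrix (Fin 2) (Fin 2) Fq) 0 1 with hb
  set c := (↑N : Matrix (Fin 2) (Fin 2) Fq) 1 0 with hcc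
  set d := (↑N : Matrix (Fin 2) (Fin 2) Fq) 1 1 with hd
  have hdet : a * d - b * c = 1 := by
    have := N.2
    rwa [Matrix.det_fin_two] at this
  have hN : N = usl ((a - 1) * c⁻¹) * lsl c * usl ((d - 1) * c⁻¹) := by
    apply Subtype.ext
    rw [Matrix.SpecialLinearGroup.coe_mul, Matrix.SpecialLinearGroup.coe_mul]
    ext i j
    fin_cases i <;> fin_cases j <;>
      simp [usl, lsl, Matrix.mul_apply, Fin.sum_univ_two, ← ha, ← hb, ← hcc, ← hd]
    · field_simp
      ring
    · field_simp
      linear_combination -hdet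
    · field_simp
      ring
  rw [hN]
  exact mul_mem (mul_mem (usl_mem _) (lsl_mem _)) (usl_mem _)

lemma gen_AC : Subgroup.closure ({Asl, Csl} : Set SL2) = ⊤ := by
  rw [Subgroup.eq_top_iff']
  intro M
  by_cases hc : (↑M : Matrix (Fin 2) (Fin 2) Fq) 1 0 ≠ 0
  · exact key_c_ne M hc
  · push_neg at hc
    have hdet : (↑M : Matrix (Fin 2) (Fin 2) Fq) 0 0 * (↑M : Matrix (Fin 2) (Fin 2) Fq) 1 1 = 1 := by
      have := M.2
      rw [Matrix.det_fin_two] at this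
      rw [hc] at this
      simpa using this
    have hd : (↑M : Matrix (Fin 2) (Fin 2) Fq) 1 1 ≠ 0 := by
      intro h
      rw [h, mul_zero] at hdet
      exact zero_ne_one hdet
    have hM' : (↑(M * lsl 1) : Matrix (Fin 2) (Fin 2) Fq) 1 0 ≠ 0 := by
      rw [Matrix.SpecialLinearGroup.coe_mul, Matrix.mul_apply, Fin.sum_univ_two]
      simp [lsl, hc]
      exact hd
    have := key_c_ne (M * lsl 1) hM'
    have h2 : M = (M * lsl 1) * (lsl 1)⁻¹ := by group
    rw [h2]
    exact mul_mem this (inv_mem (lsl_mem 1))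

end Part3

noncomputable section Part4

lemma ker_eq_center : φ.ker = Subgroup.center SL2 := by
  ext M
  rw [MonoidHom.mem_ker]
  constructor
  · intro hM
    have hfix : ∀ k : Fin 12, ∃ c : Fq,
        c • rep k = (↑M : Matrix (Fin 2) (Fin 2) Fq).mulVec (rep k) := by
      intro k
      have h1 : φ M k = k := by rw [hM]; rfl
      rw [φ_apply, Equiv.symm_apply_eq, e12_apply, Pmap_mk,
        Projectivization.mk_eq_mk_iff'] at h1
      exact h1
    obtain ⟨c0, hc0⟩ := hfix 11
    obtain ⟨c1, hc1⟩ := hfix 0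
    obtain ⟨c2, hc2⟩ := hfix 1
    have r00 : rep 11 = ![1, 0] := by unfold rep; rw [if_pos rfl]
    have r0 : rep 0 = ![0, 1] := by unfold rep; rw [if_neg (by decide)]; norm_num
    have r1 : rep 1 = ![1, 1] := by unfold rep; rw [if_neg (by decide)]; norm_num
    rw [r00] at hc0; rw [r0] at hc1; rw [r1] at hc2
    have h00 := congrFun hc0 0
    have h01 := congrFun hc0 1
    have h10 := congrFun hc1 0
    have h11 := congrFun hc1 1
    have h20 := congrFun hc2 0
    have h21 := congrFun hc2 1
    simp [Matrix.mulVec, dotProduct, Fin.sum_univ_two] at h00 h01 h10 h11 h20 h21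
    -- h00 : c0 = M00, h01 : 0 = M10, h10 : 0 = M01, h11 : c1 = M11, h20 : c2 = M00 + M01...
    rw [Matrix.SpecialLinearGroup.mem_center_iff]
    refine ⟨(↑M : Matrix (Fin 2) (Fin 2) Fq) 0 0, ?_, ?_⟩
    · have hdet := M.2
      rw [Matrix.det_fin_two] at hdet
      have hdd : (↑M : Matrix (Fin 2) (Fin 2) Fq) 0 0 = (↑M : Matrix (Fin 2) (Fin 2) Fq) 1 1 := by
        have h3 := h20.symm.trans h21
        rw [← h10, ← h01] at h3
        simpa using h3
      rw [Fintype.card_fin, pow_two]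
      linear_combination hdet + (↑M : Matrix (Fin 2) (Fin 2) Fq) 0 0 * hdd
        - (↑M : Matrix (Fin 2) (Fin 2) Fq) 1 0 * h10
    · have hdd : (↑M : Matrix (Fin 2) (Fin 2) Fq) 0 0 = (↑M : Matrix (Fin 2) (Fin 2) Fq) 1 1 := by
        have h3 := h20.symm.trans h21
        rw [← h10, ← h01] at h3
        simpa using h3
      ext i j
      fin_cases i <;> fin_cases j <;> simp [Matrix.scalar_apply, Matrix.diagonal]
      · exact h10
      · exact h01
      · exact hdd
  · intro hM
    obtain ⟨r, hr, hrs⟩ := Matrix.SpecialLinearGroup.mem_center_iff.mp hM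
    apply Equiv.ext; intro k
    show φ M k = (1 : Equiv.Perm (Fin 12)) k
    rw [Equiv.Perm.one_apply]
    apply φ_apply_eq M k k r
    rw [← hrs]
    funext i
    fin_cases i <;>
      simp [Matrix.mulVec, dotProduct, Fin.sum_univ_two, Matrix.scalar_apply,
        Matrix.diagonal] <;> ring

end Part4


lemma gen_ABC : Subgroup.closure ({Asl, Bsl, Csl} : Set SL2) = ⊤ := by
  rw [eq_top_iff, ← gen_AC]
  apply Subgroup.closure_mono
  intro x hx
  simp only [Set.mem_insert_iff, Set.mem_singleton_iff] at hx ⊢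
  tauto

lemma range_φ : φ.range = L2_11_A := by
  rw [MonoidHom.range_eq_map, ← gen_ABC, MonoidHom.map_closure]
  unfold L2_11_A
  congr 1
  rw [Set.image_insert_eq, Set.image_insert_eq, Set.image_singleton, φ_A, φ_B, φ_C]

end L2Aux

theorem L2_11_A_iso_PSL2_11 : Nonempty (L2_11_A ≃* L2_11) := by
  refine ⟨?_⟩
  have h1 := QuotientGroup.quotientMulEquivOfEq ker_eq_center.symm
  have h2 := QuotientGroup.quotientKerEquivRange φ
  have h3 := MulEquiv.subgroupCongr range_φ
  exact ((h1.trans h2).trans h3).symm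
end

section
/- The subgroup L₂(11)_B = ⟨α, β, δ⟩ of Perm(Fin 12) is isomorphic as a group to L₂(11) = PSL(2, 𝔽₁₁). -/
set_option maxRecDepth 200000
set_option maxHeartbeats 8000000

open Equiv

/-- L₂(11)_B, the subgroup of Perm (Fin 12) generated by α, β, δ. -/
def L2_11_B : Subgroup (Equiv.Perm (Fin 12)) := Subgroup.closure {α, β, δ}

/-! ### Auxiliary setup -/

abbrev SL11 := Matrix.SpecialLinearGroup (Fin 2) (ZMod 11)

instance inst_s4 : Fact (Nat.Prime 11) := ⟨by norm_num⟩

instance : DecidableEq (Matrix (Fin 2) (Fin 2) (ZMod 11)) :=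
  fun A B => @decidable_of_iff _ _ Matrix.ext_iff
    (@Fintype.decidableForallFintype _ _ (fun i => @Fintype.decidableForallFintype _ _ (fun j => ZMod.decidableEq 11 (A i j) (B i j)) _) _)

/-- A computable inverse on `ZMod 11` (the library one is not kernel-reducible). -/
def zinv (x : ZMod 11) : ZMod 11 := x ^ 9

lemma zinv_eq (x : ZMod 11) : zinv x = x⁻¹ := by
  rcases eq_or_ne x 0 with h | h
  · subst h; simp [zinv]
  · refine eq_inv_of_mul_eq_one_left ?_
    have h10 : x ^ 10 = 1 := by
      have := ZMod.pow_card_sub_one_eq_one (a := x) h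
      norm_num at this; exact this
    calc zinv x * x = x ^ 10 := by rw [zinv]; ring
    _ = 1 := h10

/-- Normalization of a nonzero vector in `(ZMod 11)²` to a point of `P¹` coded in `Fin 12`:
`(x, y)` with `y ≠ 0` goes to `x/y ∈ {0,…,10}`, and `(x, 0)` goes to `∞ = 11`. -/
def nrm (w : ZMod 11 × ZMod 11) : Fin 12 :=
  if w.2 = 0 then 11 else ⟨(w.1 * zinv w.2).val, Nat.lt_succ_of_lt (ZMod.val_lt _)⟩

/-- Standard representative vector of a point of `P¹`. -/
def vec (i : Fin 12) : ZMod 11 × ZMod 11 :=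
  if i.val < 11 then ((i.val : ZMod 11), 1) else (1, 0)

/-- Matrix times vector. -/
def app (A : Matrix (Fin 2) (Fin 2) (ZMod 11)) (w : ZMod 11 × ZMod 11) :
    ZMod 11 × ZMod 11 :=
  (A 0 0 * w.1 + A 0 1 * w.2, A 1 0 * w.1 + A 1 1 * w.2)

/-- Möbius action of a matrix on `P¹ = Fin 12`. -/
def mobM (A : Matrix (Fin 2) (Fin 2) (ZMod 11)) (i : Fin 12) : Fin 12 :=
  nrm (app A (vec i))

/-- Möbius action of `SL(2, ZMod 11)` on `P¹ = Fin 12`. -/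
def mob (M : SL11) (i : Fin 12) : Fin 12 := mobM M.1 i

/-- Explicit inverse matrix (for kernel computations). -/
def minv (A : Matrix (Fin 2) (Fin 2) (ZMod 11)) : Matrix (Fin 2) (Fin 2) (ZMod 11) :=
  !![A 1 1, -A 0 1; -A 1 0, A 0 0]

lemma coe_inv_eq (M : SL11) : (M⁻¹).1 = minv M.1 := by
  rw [Matrix.SpecialLinearGroup.coe_inv, Matrix.adjugate_fin_two]
  rfl

lemma nrm_smul {c : ZMod 11} (hc : c ≠ 0) (w : ZMod 11 × ZMod 11) :
    nrm (c * w.1, c * w.2) = nrm w := by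
  obtain ⟨x, y⟩ := w
  rcases eq_or_ne y 0 with hy | hy
  · subst hy; simp [nrm, hc]
  · have hcy : c * y ≠ 0 := mul_ne_zero hc hy
    have hxy : c * x * zinv (c * y) = x * zinv y := by
      rw [zinv_eq, zinv_eq, mul_inv]
      field_simp
    simp [nrm, hy, hcy, hxy]

lemma vec_nrm {w : ZMod 11 × ZMod 11} (hw : ¬(w.1 = 0 ∧ w.2 = 0)) :
    ∃ c : ZMod 11, c ≠ 0 ∧ vec (nrm w) = (c * w.1, c * w.2) := by
  obtain ⟨x, y⟩ := w
  rcases eq_or_ne y 0 with hy | hy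
  · subst hy
    have hx : x ≠ 0 := fun h => hw ⟨h, rfl⟩
    refine ⟨x⁻¹, inv_ne_zero hx, ?_⟩
    have h1 : nrm (x, 0) = 11 := by simp [nrm]
    rw [h1]
    have h2 : vec 11 = (1, 0) := by decide
    rw [h2]
    exact Prod.ext (inv_mul_cancel₀ hx).symm (by ring)
  · refine ⟨y⁻¹, inv_ne_zero hy, ?_⟩
    have h1 : nrm (x, y) = ⟨(x * zinv y).val, Nat.lt_succ_of_lt (ZMod.val_lt _)⟩ := by
      simp [nrm, hy]
    rw [h1]
    have hlt : (x * zinv y).val < 11 := ZMod.val_lt _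
    simp only [vec, hlt, if_pos]
    rw [ZMod.natCast_val, ZMod.cast_id, zinv_eq]
    exact Prod.ext (by ring) (inv_mul_cancel₀ hy).symm

lemma app_ne {A : Matrix (Fin 2) (Fin 2) (ZMod 11)} (hA : A.det = 1)
    {w : ZMod 11 × ZMod 11} (hw : ¬(w.1 = 0 ∧ w.2 = 0)) :
    ¬((app A w).1 = 0 ∧ (app A w).2 = 0) := by
  rintro ⟨h1, h2⟩
  rw [Matrix.det_fin_two] at hA
  refine hw ⟨?_, ?_⟩
  · have : w.1 = A 1 1 * (app A w).1 - A 0 1 * (app A w).2 := by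
      simp only [app]; linear_combination (-w.1) * hA
    rw [this, h1, h2]; ring
  · have : w.2 = A 0 0 * (app A w).2 - A 1 0 * (app A w).1 := by
      simp only [app]; linear_combination (-w.2) * hA
    rw [this, h1, h2]; ring

lemma vec_ne (i : Fin 12) : ¬((vec i).1 = 0 ∧ (vec i).2 = 0) := by
  unfold vec
  split_ifs <;> simp

lemma app_mul (M N : SL11) (w : ZMod 11 × ZMod 11) :
    app (M * N).1 w = app M.1 (app N.1 w) := by
  have h : (M * N).1 = M.1 * N.1 := rfl
  rw [h]
  simp only [app, Matrix.mul_apply, Fin.sum_univ_two, Prod.mk.injEq]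
  constructor <;> ring

lemma app_smul (A : Matrix (Fin 2) (Fin 2) (ZMod 11)) (c : ZMod 11)
    (w : ZMod 11 × ZMod 11) :
    app A (c * w.1, c * w.2) = (c * (app A w).1, c * (app A w).2) := by
  simp only [app]
  exact Prod.ext (by ring) (by ring)

lemma mob_mul (M N : SL11) (i : Fin 12) : mob (M * N) i = mob M (mob N i) := by
  unfold mob mobM
  obtain ⟨c, hc, hv⟩ := vec_nrm (app_ne N.2 (vec_ne i))
  rw [hv, app_smul, nrm_smul hc, app_mul]

lemma mob_one : ∀ i : Fin 12, mob 1 i = i := by decide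

lemma mob_inv (M : SL11) (i : Fin 12) : mob M⁻¹ (mob M i) = i := by
  rw [← mob_mul, inv_mul_cancel]
  exact mob_one i

/-- Conjugation action on functions `Fin 12 → Fin 12` (used on perfect matchings). -/
def cfM (A : Matrix (Fin 2) (Fin 2) (ZMod 11)) (f : Fin 12 → Fin 12) :
    Fin 12 → Fin 12 :=
  fun z => mobM A (f (mobM (minv A) z))

def cf (M : SL11) (f : Fin 12 → Fin 12) : Fin 12 → Fin 12 := cfM M.1 f

lemma cf_eq (M : SL11) (f : Fin 12 → Fin 12) (z : Fin 12) :
    cf M f z = mob M (f (mob M⁻¹ z)) := by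
  simp only [cf, cfM, mob, coe_inv_eq]

lemma cf_mul (M N : SL11) (f : Fin 12 → Fin 12) :
    cf (M * N) f = cf M (cf N f) := by
  funext z
  rw [cf_eq, cf_eq, cf_eq, mul_inv_rev, mob_mul, mob_mul]

lemma cf_one (f : Fin 12 → Fin 12) : cf 1 f = f := by
  funext z
  rw [cf_eq, inv_one, mob_one, mob_one]

/-- The 11 perfect matchings of `Fin 12` (as involutions) forming an orbit of the
Möbius action by conjugation; the 12th entry is a dummy. -/
def hexf : Fin 12 → Fin 12 → Fin 12 :=
  ![![11,6,4,7,2,8,1,3,5,10,9,0],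
    ![10,11,7,5,8,3,9,2,4,6,0,1],
    ![1,0,11,8,6,9,4,10,3,5,7,2],
    ![8,2,1,11,9,7,10,5,0,4,6,3],
    ![7,9,3,2,11,10,8,0,6,1,5,4],
    ![6,8,10,4,3,11,0,9,1,7,2,5],
    ![3,7,9,0,5,4,11,1,10,2,8,6],
    ![9,4,8,10,1,6,5,11,2,0,3,7],
    ![4,10,5,9,0,2,7,6,11,3,1,8],
    ![2,5,0,6,10,1,3,8,7,11,4,9],
    ![5,3,6,1,7,0,2,4,9,8,11,10],
    ![0,0,0,0,0,0,0,0,0,0,0,0]]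

def lookup (f : Fin 12 → Fin 12) : Fin 12 :=
  (((List.finRange 12)).find? (fun j => decide (hexf j = f))).getD 11

lemma lookup_hexf : ∀ j : Fin 12, lookup (hexf j) = j := by decide

/-- The stability submonoid: matrices whose conjugation action permutes the 11 matchings. -/
def HSm : Submonoid SL11 where
  carrier := {M | ∀ i : Fin 12, i ≠ 11 → ∃ j : Fin 12, j ≠ 11 ∧ cf M (hexf i) = hexf j}
  one_mem' := fun i hi => ⟨i, hi, cf_one _⟩
  mul_mem' := by
    intro M N hM hN i hi
    obtain ⟨j, hj, hj2⟩ := hN i hi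
    obtain ⟨k, hk, hk2⟩ := hM j hj
    exact ⟨k, hk, by rw [cf_mul, hj2, hk2]⟩

def Tc (c : ZMod 11) : SL11 :=
  ⟨!![1, c; 0, 1], by simp [Matrix.det_fin_two_of]⟩

def Lc (c : ZMod 11) : SL11 :=
  ⟨!![1, 0; c, 1], by simp [Matrix.det_fin_two_of]⟩

def Sm : SL11 := ⟨!![0, -1; 1, 0], by norm_num [Matrix.det_fin_two_of]⟩

def Bm : SL11 := ⟨!![5, 0; 0, 9], by norm_num [Matrix.det_fin_two_of]; decide⟩

def gens : Set SL11 := {Sm} ∪ Set.range Tc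

/-- `Lc c` as a (positive) word in the generators: `Lc c = Sm * Tc (-c) * Sm^3`. -/
lemma Lc_word (c : ZMod 11) : Lc c = Sm * Tc (-c) * (Sm * (Sm * Sm)) := by
  apply Subtype.ext
  show (Lc c).1 = Sm.1 * (Tc (-c)).1 * (Sm.1 * (Sm.1 * Sm.1))
  simp only [Lc, Tc, Sm]
  ext i j
  fin_cases i <;> fin_cases j <;>
    simp [Matrix.mul_apply, Fin.sum_univ_two] <;> ring

lemma Lc_mem (c : ZMod 11) : Lc c ∈ Submonoid.closure gens := by
  have hS : Sm ∈ Submonoid.closure gens :=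
    Submonoid.subset_closure (Or.inl rfl)
  have hT : Tc (-c) ∈ Submonoid.closure gens :=
    Submonoid.subset_closure (Or.inr ⟨-c, rfl⟩)
  rw [Lc_word]
  exact mul_mem (mul_mem hS hT) (mul_mem hS (mul_mem hS hS))

lemma mem_of_lowleft_ne {g : SL11} (h : g.1 1 0 ≠ 0) :
    g ∈ Submonoid.closure gens := by
  set a := g.1 0 0 with ha
  set b := g.1 0 1 with hb
  set c := g.1 1 0 with hc
  set d := g.1 1 1 with hd
  have hdet : a * d - b * c = 1 := by
    rw [ha, hb, hc, hd, ← Matrix.det_fin_two]; exact g.2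
  have key : g = Tc ((a - 1) / c) * Lc c * Tc ((d - 1) / c) := by
    apply Subtype.ext
    show g.1 = (Tc ((a-1)/c)).1 * (Lc c).1 * (Tc ((d-1)/c)).1
    have hg : g.1 = !![a, b; c, d] := by
      rw [ha, hb, hc, hd]; exact (Matrix.eta_fin_two g.1)
    rw [hg]
    simp only [Tc, Lc]
    ext i j
    fin_cases i <;> fin_cases j <;>
      simp [Matrix.mul_apply, Fin.sum_univ_two] <;>
      field_simp <;>
      first
        | ring1
        | linear_combination hdet
        | linear_combination -hdet
        | linear_combination 2 * hdet
        | linear_combination -2 * hdet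
        | linear_combination c * hdet
        | linear_combination -c * hdet
        | linear_combination (c * c) * hdet
        | linear_combination (-c * c) * hdet
  rw [key]
  exact mul_mem (mul_mem (Submonoid.subset_closure (Or.inr ⟨_, rfl⟩)) (Lc_mem c))
    (Submonoid.subset_closure (Or.inr ⟨_, rfl⟩))

lemma gen_mem (g : SL11) : g ∈ Submonoid.closure gens := by
  rcases eq_or_ne (g.1 1 0) 0 with hc | hc
  · have hdet : g.1 0 0 * g.1 1 1 - g.1 0 1 * g.1 1 0 = 1 := by
      rw [← Matrix.det_fin_two]; exact g.2
    have ha : g.1 0 0 ≠ 0 := by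
      intro h0
      rw [h0, hc] at hdet
      norm_num at hdet
    have h2 : (Lc 1 * g).1 1 0 = g.1 0 0 := by
      show ((Lc 1).1 * g.1) 1 0 = g.1 0 0
      simp [Lc, Matrix.mul_apply, Fin.sum_univ_two, hc]
    have hmem : Lc 1 * g ∈ Submonoid.closure gens :=
      mem_of_lowleft_ne (by rw [h2]; exact ha)
    have hlk : Lc (-1) * (Lc 1 * g) = g := by
      rw [← mul_assoc]
      have : Lc (-1) * Lc 1 = 1 := by
        apply Subtype.ext
        show (Lc (-1)).1 * (Lc 1).1 = (1 : SL11).1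
        ext i j
        fin_cases i <;> fin_cases j <;>
          simp [Lc, Matrix.mul_apply, Fin.sum_univ_two]
      rw [this, one_mul]
    rw [← hlk]
    exact mul_mem (Lc_mem (-1)) hmem
  · exact mem_of_lowleft_ne hc

lemma Sm_stab : Sm ∈ HSm := by
  show ∀ i : Fin 12, i ≠ 11 → ∃ j : Fin 12, j ≠ 11 ∧ cf Sm (hexf i) = hexf j
  decide

lemma Tc_stab : ∀ c : ZMod 11, Tc c ∈ HSm := by
  show ∀ c : ZMod 11, ∀ i : Fin 12, i ≠ 11 →
    ∃ j : Fin 12, j ≠ 11 ∧ cf (Tc c) (hexf i) = hexf j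
  decide

lemma hstable (M : SL11) : ∀ i : Fin 12, i ≠ 11 →
    ∃ j : Fin 12, j ≠ 11 ∧ cf M (hexf i) = hexf j := by
  have hle : Submonoid.closure gens ≤ HSm := by
    rw [Submonoid.closure_le]
    rintro x (rfl | ⟨c, rfl⟩)
    · exact Sm_stab
    · exact Tc_stab c
  exact hle (gen_mem M)

/-! ### The exotic homomorphism -/

def Fm (M : SL11) : Fin 12 → Fin 12 :=
  fun i => if i = 11 then 11 else lookup (cf M (hexf i))

lemma Fm_apply (M : SL11) {i j : Fin 12} (hi : i ≠ 11) (hj : j ≠ 11)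
    (h : cf M (hexf i) = hexf j) : Fm M i = j := by
  rw [Fm, if_neg hi, h, lookup_hexf]

lemma Fm_eleven (M : SL11) : Fm M 11 = 11 := by rw [Fm, if_pos rfl]

lemma Fm_inv (M : SL11) (i : Fin 12) : Fm M⁻¹ (Fm M i) = i := by
  rcases eq_or_ne i 11 with hi | hi
  · subst hi; rw [Fm_eleven, Fm_eleven]
  · obtain ⟨j, hj, h⟩ := hstable M i hi
    rw [Fm_apply M hi hj h]
    refine Fm_apply M⁻¹ hj hi ?_
    rw [← h, ← cf_mul, inv_mul_cancel, cf_one]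

def φB : SL11 →* Equiv.Perm (Fin 12) where
  toFun M := ⟨Fm M, Fm M⁻¹, Fm_inv M, fun i => by
    have := Fm_inv M⁻¹ i
    rwa [inv_inv] at this⟩
  map_one' := by
    apply Equiv.ext
    intro i
    show Fm 1 i = i
    rcases eq_or_ne i 11 with hi | hi
    · subst hi; exact Fm_eleven 1
    · exact Fm_apply 1 hi hi (cf_one _)
  map_mul' := by
    intro M N
    apply Equiv.ext
    intro i
    show Fm (M * N) i = Fm M (Fm N i)
    rcases eq_or_ne i 11 with hi | hi
    · subst hi; rw [Fm_eleven, Fm_eleven, Fm_eleven]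
    · obtain ⟨j, hj, hN⟩ := hstable N i hi
      obtain ⟨k, hk, hM⟩ := hstable M j hj
      rw [Fm_apply N hi hj hN]
      rw [Fm_apply M hj hk hM]
      refine Fm_apply (M * N) hi hk ?_
      rw [cf_mul, hN, hM]

/-! ### Images of the generators -/

lemma φB_T : φB (Tc 1) = α := by
  apply Equiv.ext
  have : ∀ i, Fm (Tc 1) i = α i := by decide
  exact this

lemma φB_B : φB Bm = β := by
  apply Equiv.ext
  have : ∀ i, Fm Bm i = β i := by decide
  exact this

lemma φB_S : φB Sm = δ := by
  apply Equiv.ext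
  have : ∀ i, Fm Sm i = δ i := by decide
  exact this

lemma φB_Tc : ∀ c : ZMod 11, ∀ i, Fm (Tc c) i = (α ^ c.val) i := by decide

/-! ### Range of φB -/

lemma range_le : φB.range ≤ L2_11_B := by
  rintro x ⟨M, rfl⟩
  induction gen_mem M using Submonoid.closure_induction with
  | one => rw [map_one]; exact one_mem _
  | mul x y _ _ hx hy => rw [map_mul]; exact mul_mem hx hy
  | mem x hx =>
    rcases hx with rfl | ⟨c, rfl⟩
    · rw [φB_S]
      exact Subgroup.subset_closure (by simp [Set.mem_insert_iff])
    · have : φB (Tc c) = α ^ c.val := Equiv.ext (φB_Tc c)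
      rw [this]
      exact pow_mem (Subgroup.subset_closure (by simp [Set.mem_insert_iff])) _

lemma le_range : L2_11_B ≤ φB.range := by
  rw [L2_11_B, Subgroup.closure_le]
  rintro x (rfl | rfl | rfl)
  · exact ⟨Tc 1, φB_T⟩
  · exact ⟨Bm, φB_B⟩
  · exact ⟨Sm, φB_S⟩

lemma range_eq : φB.range = L2_11_B := le_antisymm range_le le_range

/-! ### Kernel of φB -/

lemma dec_ker_a : ∀ a b c : ZMod 11, a ≠ 0 →
    cfM !![a, b; c, (1 + b * c) * zinv a] (hexf 0) = hexf 0 →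
    cfM !![a, b; c, (1 + b * c) * zinv a] (hexf 1) = hexf 1 →
    cfM !![a, b; c, (1 + b * c) * zinv a] (hexf 2) = hexf 2 →
    !![a, b; c, (1 + b * c) * zinv a] = 1 ∨
      !![a, b; c, (1 + b * c) * zinv a] = -1 := by decide

lemma dec_ker_b : ∀ b d : ZMod 11,
    cfM !![0, b; -zinv b, d] (hexf 0) = hexf 0 →
    cfM !![0, b; -zinv b, d] (hexf 1) = hexf 1 →
    cfM !![0, b; -zinv b, d] (hexf 2) = hexf 2 → False := by decide

lemma cf_fixed_of_ker {M : SL11} (h : φB M = 1) (i : Fin 12) (hi : i ≠ 11) :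
    cf M (hexf i) = hexf i := by
  obtain ⟨j, hj, hcf⟩ := hstable M i hi
  have hFm : Fm M i = i := by
    have := congrArg (fun (e : Equiv.Perm (Fin 12)) => e i) h
    exact this
  rw [Fm_apply M hi hj hcf] at hFm
  rwa [hFm] at hcf

lemma ker_le_center : φB.ker ≤ Subgroup.center SL11 := by
  intro M hM
  rw [MonoidHom.mem_ker] at hM
  have h0 : cf M (hexf 0) = hexf 0 := cf_fixed_of_ker hM 0 (by decide)
  have h1 : cf M (hexf 1) = hexf 1 := cf_fixed_of_ker hM 1 (by decide)
  have h2 : cf M (hexf 2) = hexf 2 := cf_fixed_of_ker hM 2 (by decide)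
  set a := M.1 0 0 with ha
  set b := M.1 0 1 with hb
  set c := M.1 1 0 with hc
  set d := M.1 1 1 with hd
  have hdet : a * d - b * c = 1 := by
    rw [ha, hb, hc, hd, ← Matrix.det_fin_two]; exact M.2
  have hg : M.1 = !![a, b; c, d] := by
    rw [ha, hb, hc, hd]; exact (Matrix.eta_fin_two M.1)
  rcases eq_or_ne a 0 with haz | haz
  · -- a = 0 : contradiction via dec_ker_b
    exfalso
    have hbz : b ≠ 0 := by
      intro h0
      rw [haz, h0] at hdet; norm_num at hdet
    have hbc : b * c = -1 := by linear_combination -hdet + d * haz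
    have hceq : c = -zinv b := by
      rw [zinv_eq]
      have h2 : b⁻¹ * (b * c) = b⁻¹ * (-1) := by rw [hbc]
      rw [← mul_assoc, inv_mul_cancel₀ hbz, one_mul] at h2
      rw [h2]; ring
    have hM1 : M.1 = !![0, b; -zinv b, d] := by rw [hg, haz, hceq]
    refine dec_ker_b b d ?_ ?_ ?_ <;> rw [← hM1]
    exacts [h0, h1, h2]
  · have had : a * d = 1 + b * c := by linear_combination hdet
    have hdeq : d = (1 + b * c) * zinv a := by
      rw [zinv_eq]
      have h2 : a⁻¹ * (a * d) = a⁻¹ * (1 + b * c) := by rw [had]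
      rw [← mul_assoc, inv_mul_cancel₀ haz, one_mul] at h2
      rw [h2]; ring
    have hM1 : M.1 = !![a, b; c, (1 + b * c) * zinv a] := by rw [hg, hdeq]
    have := dec_ker_a a b c haz
      (by rw [← hM1]; exact h0)
      (by rw [← hM1]; exact h1)
      (by rw [← hM1]; exact h2)
    rw [Matrix.SpecialLinearGroup.mem_center_iff]
    rcases this with h | h
    · refine ⟨1, by norm_num, ?_⟩
      rw [← hM1] at h
      rw [map_one]
      exact h.symm
    · refine ⟨-1, by norm_num, ?_⟩
      rw [← hM1] at h
      have hs : (Matrix.scalar (Fin 2)) (-1 : ZMod 11)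
          = (-1 : Matrix (Fin 2) (Fin 2) (ZMod 11)) := by
        rw [map_neg, map_one]
      rw [hs]
      exact h.symm

def negSL : SL11 := ⟨!![10, 0; 0, 10], by norm_num [Matrix.det_fin_two_of]; decide⟩

lemma φB_negSL : φB negSL = 1 := by
  apply Equiv.ext
  have : ∀ i, Fm negSL i = i := by decide
  exact this

lemma center_le_ker : Subgroup.center SL11 ≤ φB.ker := by
  intro M hM
  rw [Matrix.SpecialLinearGroup.mem_center_iff] at hM
  obtain ⟨r, hr, hscal⟩ := hM
  have hr' : r = 1 ∨ r = -1 := by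
    have : ∀ r : ZMod 11, r ^ 2 = 1 → r = 1 ∨ r = -1 := by decide
    exact this r (by simpa using hr)
  rw [MonoidHom.mem_ker]
  rcases hr' with rfl | rfl
  · have : M = 1 := by
      apply Subtype.ext
      rw [← hscal, map_one]; rfl
    rw [this, map_one]
  · have : M = negSL := by
      apply Subtype.ext
      rw [← hscal]
      show Matrix.scalar (Fin 2) (-1) = negSL.1
      ext i j
      fin_cases i <;> fin_cases j <;> simp [negSL] <;> decide
    rw [this, φB_negSL]

lemma ker_eq : φB.ker = Subgroup.center SL11 :=
  le_antisymm ker_le_center center_le_ker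

/-! ### Conclusion -/

theorem L2_11_B_iso_PSL2_11 : Nonempty (L2_11_B ≃* L2_11) := by
  let e1 : L2_11 ≃* SL11 ⧸ φB.ker :=
    QuotientGroup.quotientMulEquivOfEq ker_eq.symm
  let ψ : L2_11 →* Equiv.Perm (Fin 12) :=
    (QuotientGroup.kerLift φB).comp e1.toMonoidHom
  have hinj : Function.Injective ψ :=
    (QuotientGroup.kerLift_injective φB).comp e1.injective
  have hrange : ψ.range = L2_11_B := by
    rw [← range_eq]
    apply le_antisymm
    · rintro x ⟨q, rfl⟩
      obtain ⟨M, hMq⟩ := QuotientGroup.mk'_surjective φB.ker (e1 q)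
      refine ⟨M, ?_⟩
      show φB M = ψ q
      rw [show ψ q = QuotientGroup.kerLift φB (e1 q) from rfl, ← hMq]
      rfl
    · rintro x ⟨M, rfl⟩
      refine ⟨e1.symm (QuotientGroup.mk' φB.ker M), ?_⟩
      have h1 : ψ (e1.symm (QuotientGroup.mk' φB.ker M))
          = QuotientGroup.kerLift φB (e1 (e1.symm (QuotientGroup.mk' φB.ker M))) := rfl
      rw [h1, MulEquiv.apply_symm_apply]
      rfl
  exact ⟨(MulEquiv.subgroupCongr hrange).symm.trans
    (MonoidHom.ofInjective hinj).symm⟩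
end

section
/- As subgroups of M₁₂, L₂(11)_A and L₂(11)_B are not conjugate to each other: for every g ∈ M₁₂, the image of L₂(11)_A under conjugation by g is not equal to L₂(11)_B. -/
open Equiv

/-- M₁₂, the subgroup of Perm (Fin 12) generated by α, β, γ, δ. -/
def M12 : Subgroup (Equiv.Perm (Fin 12)) := Subgroup.closure {α, β, γ, δ}

lemma B_le_stab : L2_11_B ≤ MulAction.stabilizer (Perm (Fin 12)) (11 : Fin 12) := by
  rw [L2_11_B, Subgroup.closure_le]
  rintro x (rfl | rfl | rfl) <;>
    simp only [SetLike.mem_coe, MulAction.mem_stabilizer_iff] <;> decide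

lemma gamma_no_fixed : ∀ x : Fin 12, γ x ≠ x := by decide

theorem L2_11_A_not_conjugate_to_L2_11_B :
    ∀ g : Equiv.Perm (Fin 12), g ∈ M12 →
      Subgroup.map (MulAut.conj g).toMonoidHom L2_11_A ≠ L2_11_B := by
  intro g _ h
  have hγ : γ ∈ L2_11_A := Subgroup.subset_closure (by simp)
  have hmem : g * γ * g⁻¹ ∈ L2_11_B := by
    rw [← h]
    exact ⟨γ, hγ, rfl⟩
  have := B_le_stab hmem
  rw [MulAction.mem_stabilizer_iff] at this
  have h2 : γ (g⁻¹ 11) = g⁻¹ 11 := by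
    have : g (γ (g⁻¹ 11)) = 11 := this
    have := congrArg (⇑g⁻¹) this
    simpa using this
  exact gamma_no_fixed _ h2
end
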